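/- For the system v₃' = AMQ(A-M+AM - v₃)v₃ + A²M(Qv₃ - 1)ε₃, ε₃' = AMQ·ε₃·(A-M+AM - v₃) with A ∈ (0,1), M ∈ (-1,0), Q > 0, A-M+AM > 0: if a center manifold at p₃ = (A-M+AM, 0) is given by v₃ = g₃(ε₃) with g₃(0) = A-M+AM and g₃'(0) = A(A-M+AM-1/Q)/((A-M+AM)Q), then the reduced flow satisfies ε₃' = -(A²M(A-M+AM-1/Q)/(A-M+AM))·ε₃² + O(ε₃³); in particular, if A-M+AM > 1/Q the flow along the center manifold is directed away from p₃ (ε₃' > 0 for small ε₃ > 0). -/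

import Mathlib

open Asymptotics

lemma aux_taylor2 (g : ℝ → ℝ) (hg : ContDiffAt ℝ 2 g 0) :
    (fun x => g x - g 0 - deriv g 0 * x) =O[nhds (0:ℝ)] fun x => x^2 := by
  obtain ⟨u, hu, hgu⟩ := hg.contDiffOn le_rfl (by simp)
  obtain ⟨r, hr, hball⟩ := Metric.mem_nhds_iff.1 hu
  have hgB : ContDiffOn ℝ 2 g (Metric.ball (0:ℝ) r) := hgu.mono hball
  have hopen : IsOpen (Metric.ball (0:ℝ) r) := Metric.isOpen_ball
  -- deriv g is C¹ on the ball
  have hd : ContDiffOn ℝ 1 (deriv g) (Metric.ball (0:ℝ) r) :=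
    hgB.deriv_of_isOpen hopen (by norm_num)
  have h0 : (0:ℝ) ∈ Metric.ball (0:ℝ) r := by simpa using hr
  have hdda : DifferentiableAt ℝ (deriv g) 0 :=
    ((hd.contDiffAt (hopen.mem_nhds h0)).differentiableAt (by norm_num))
  -- deriv g x - deriv g 0 = O(x)
  have hO : (fun x => deriv g x - deriv g 0) =O[nhds (0:ℝ)] fun x => x := by
    simpa using hdda.isBigO_sub
  obtain ⟨C, hC0, hCw⟩ := hO.exists_nonneg
  have hC := hCw.bound
  rw [Filter.eventually_iff_exists_mem] at hC
  obtain ⟨v, hv, hCv⟩ := hC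
  obtain ⟨r', hr', hball'⟩ := Metric.mem_nhds_iff.1 hv
  set ρ := min r r' with hρ
  have hρpos : 0 < ρ := lt_min hr hr'
  rw [isBigO_iff]
  refine ⟨C, Filter.eventually_iff_exists_mem.2 ⟨Metric.ball 0 ρ,
    Metric.ball_mem_nhds _ hρpos, fun x hx => ?_⟩⟩
  have hxr : |x| < ρ := by simpa [Real.dist_eq] using hx
  -- mean value inequality on uIcc 0 x
  have hseg : Set.uIcc (0:ℝ) x ⊆ Metric.ball (0:ℝ) r := by
    intro t ht
    rw [Metric.mem_ball, Real.dist_eq, sub_zero]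
    have h2 : |t| ≤ |x| := abs_le.2 ⟨le_trans (le_min (neg_nonpos_of_nonneg
      (abs_nonneg x)) (neg_abs_le x)) ht.1,
      le_trans ht.2 (max_le (abs_nonneg x) (le_abs_self x))⟩
    calc |t| ≤ |x| := h2
      _ < ρ := hxr
      _ ≤ r := min_le_left _ _
  have key : ∀ t ∈ Set.uIcc (0:ℝ) x,
      HasDerivWithinAt (fun y => g y - deriv g 0 * y) (deriv g t - deriv g 0)
        (Set.uIcc (0:ℝ) x) t := by
    intro t ht
    have htB : t ∈ Metric.ball (0:ℝ) r := hseg ht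
    have : DifferentiableAt ℝ g t :=
      (hgB.contDiffAt (hopen.mem_nhds htB)).differentiableAt (by norm_num)
    exact ((this.hasDerivAt.sub ((hasDerivAt_id t).const_mul
      (deriv g 0))).hasDerivWithinAt).congr_deriv (by ring)
  have bound : ∀ t ∈ Set.uIcc (0:ℝ) x, ‖deriv g t - deriv g 0‖ ≤ C * |x| := by
    intro t ht
    have htv : t ∈ v := by
      apply hball'
      rw [Metric.mem_ball, Real.dist_eq, sub_zero]
      have h2 : |t| ≤ |x| := abs_le.2 ⟨le_trans (le_min (neg_nonpos_of_nonneg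
        (abs_nonneg x)) (neg_abs_le x)) ht.1,
        le_trans ht.2 (max_le (abs_nonneg x) (le_abs_self x))⟩
      exact lt_of_le_of_lt h2 (lt_of_lt_of_le hxr (min_le_right _ _))
    have h2 : |t| ≤ |x| := abs_le.2 ⟨le_trans (le_min (neg_nonpos_of_nonneg
      (abs_nonneg x)) (neg_abs_le x)) ht.1,
      le_trans ht.2 (max_le (abs_nonneg x) (le_abs_self x))⟩
    calc ‖deriv g t - deriv g 0‖ ≤ C * ‖t‖ := hCv t htv
      _ ≤ C * |x| := mul_le_mul_of_nonneg_left (by simpa using h2) hC0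
  have := (convex_uIcc (0:ℝ) x).norm_image_sub_le_of_norm_hasDerivWithin_le
    key bound Set.left_mem_uIcc Set.right_mem_uIcc
  have heq : g x - g 0 - deriv g 0 * x
      = (g x - deriv g 0 * x) - (g 0 - deriv g 0 * 0) := by ring
  rw [heq]
  calc ‖(g x - deriv g 0 * x) - (g 0 - deriv g 0 * 0)‖
      ≤ C * |x| * ‖x - 0‖ := this
    _ = C * ‖x^2‖ := by
        rw [sub_zero, Real.norm_eq_abs, Real.norm_eq_abs, abs_pow]
        ring

theorem stmt_16 (A M Q : ℝ)
    (hA : A ∈ Set.Ioo (0:ℝ) 1) (hM : M ∈ Set.Ioo (-1:ℝ) 0) (hQ : 0 < Q)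
    (hpos : 0 < A - M + A*M)
    (Fv Fe : ℝ → ℝ → ℝ)
    (hFv : ∀ v₃ ε₃, Fv v₃ ε₃ = A*M*Q*(A - M + A*M - v₃)*v₃ + A^2*M*(Q*v₃ - 1)*ε₃)
    (hFe : ∀ v₃ ε₃, Fe v₃ ε₃ = A*M*Q*ε₃*(A - M + A*M - v₃))
    (g₃ : ℝ → ℝ) (hg : ContDiffAt ℝ 2 g₃ 0)
    (hg0 : g₃ 0 = A - M + A*M)
    (hg1 : deriv g₃ 0 = A*(A - M + A*M - 1/Q)/((A - M + A*M)*Q))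
    (hinv : ∀ ε₃, deriv g₃ ε₃ * Fe (g₃ ε₃) ε₃ = Fv (g₃ ε₃) ε₃) :
    ((fun ε₃ => Fe (g₃ ε₃) ε₃ -
        (-(A^2*M*(A - M + A*M - 1/Q)/(A - M + A*M)) * ε₃^2))
      =O[nhds (0:ℝ)] fun ε₃ => ε₃^3) ∧
    (1/Q < A - M + A*M →
      ∃ δ > 0, ∀ ε₃ ∈ Set.Ioo (0:ℝ) δ, 0 < Fe (g₃ ε₃) ε₃) := by
  obtain ⟨hA0, hA1⟩ := hA
  obtain ⟨hM1, hM0⟩ := hM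
  have hCne : A - M + A*M ≠ 0 := ne_of_gt hpos
  have hQne : Q ≠ 0 := ne_of_gt hQ
  constructor
  · have hR := aux_taylor2 g₃ hg
    have h1 : (fun ε => ε * (g₃ ε - g₃ 0 - deriv g₃ 0 * ε))
        =O[nhds (0:ℝ)] fun ε => ε^3 := by
      have := (isBigO_refl (fun ε : ℝ => ε) (nhds 0)).mul hR
      exact this.trans (Asymptotics.isBigO_of_le _ (fun x => by
        simp [abs_mul, abs_pow, pow_succ, pow_two, mul_assoc, le_refl]))
    have heq : (fun ε₃ => Fe (g₃ ε₃) ε₃ -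
        (-(A^2*M*(A - M + A*M - 1/Q)/(A - M + A*M)) * ε₃^2))
        = fun ε => (-(A*M*Q)) * (ε * (g₃ ε - g₃ 0 - deriv g₃ 0 * ε)) := by
      funext ε
      rw [hFe, hg0, hg1]
      field_simp
      ring
    rw [heq]
    exact h1.const_mul_left _
  · intro hcond
    have hd0pos : 0 < deriv g₃ 0 := by
      rw [hg1]
      have h1 : 0 < A - M + A*M - 1/Q := by linarith
      exact div_pos (mul_pos hA0 h1) (mul_pos hpos hQ)
    have hd : HasDerivAt g₃ (deriv g₃ 0) 0 :=
      ((hg.differentiableAt (by norm_num)).hasDerivAt)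
    have hslope := hasDerivAt_iff_tendsto_slope.1 hd
    have hev : ∀ᶠ ε in nhdsWithin (0:ℝ) {(0:ℝ)}ᶜ, 0 < slope g₃ 0 ε :=
      hslope.eventually (eventually_gt_nhds hd0pos)
    rw [eventually_nhdsWithin_iff] at hev
    rw [Metric.eventually_nhds_iff] at hev
    obtain ⟨δ, hδ, hδP⟩ := hev
    refine ⟨δ, hδ, fun ε hε => ?_⟩
    obtain ⟨hε0, hεδ⟩ := hε
    have hεne : ε ≠ 0 := ne_of_gt hε0
    have hdist : dist ε (0:ℝ) < δ := by
      rw [Real.dist_eq, sub_zero, abs_of_pos hε0]; exact hεδ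
    have hsl : 0 < slope g₃ 0 ε := hδP hdist (by simpa using hεne)
    rw [slope_def_field] at hsl
    have hnum : 0 < g₃ ε - g₃ 0 := by
      have h2 := mul_pos hsl hε0
      rwa [sub_zero, div_mul_cancel₀ _ hεne] at h2
    have hAMQ : A*M*Q < 0 := by
      have : 0 < A * (-M) * Q := mul_pos (mul_pos hA0 (neg_pos.2 hM0)) hQ
      nlinarith
    rw [hFe]
    exact mul_pos_of_neg_of_neg (mul_neg_of_neg_of_pos hAMQ hε0)
      (by rw [← hg0]; linarith)
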